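/- Define I_{kl}(q) = q_{kl} / SINR_{kl}(q) = 1 / (p_{kl} M · β_{kl}ᴴ (∑_{n≠l} β_{kn} β_{kn}ᴴ p_{kn} q_{kn} M + Λ_k(q))⁻¹ β_{kl}), where Λ_k(q) is diagonal with j-th entry λ_{jk}(q) = (1 + ∑_i β_{jki} p_{ki})(1 + ∑_n ∑_m β_{jmn} q_{mn}). Then I_{kl} is monotone: q₁ ≥ q₂ componentwise implies I_{kl}(q₁) ≥ I_{kl}(q₂). -/

import Mathlib

open Matrix Finset

variable {K L : ℕ}

/-- The noise-plus-interference diagonal entries `λ_{jk}(q)`. -/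
noncomputable def lamDiag (β : Fin L → Fin K → Fin L → ℝ) (p : Fin K → Fin L → ℝ)
    (k : Fin K) (q : Fin K → Fin L → ℝ) : Fin L → ℝ :=
  fun j => (1 + ∑ i, β j k i * p k i) * (1 + ∑ n, ∑ m, β j m n * q m n)

/-- The denominator matrix `∑_{n≠l} β_{kn} β_{kn}ᴴ p_{kn} q_{kn} M + Λ_k(q)`. -/
noncomputable def denomMat (β : Fin L → Fin K → Fin L → ℝ) (p : Fin K → Fin L → ℝ)
    (M : ℝ) (k : Fin K) (l : Fin L) (q : Fin K → Fin L → ℝ) :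
    Matrix (Fin L) (Fin L) ℝ :=
  ∑ n ∈ univ.erase l,
    (p k n * q k n * M) • vecMulVec (fun j => β j k n) (fun j => β j k n) +
  diagonal (lamDiag β p k q)

/-- The interference function `I_{kl}(q) = q_{kl}/SINR_{kl}(q)
  = 1/(p_{kl} M · β_{kl}ᴴ (denomMat q)⁻¹ β_{kl})`. -/
noncomputable def interfFun (β : Fin L → Fin K → Fin L → ℝ) (p : Fin K → Fin L → ℝ)
    (M : ℝ) (k : Fin K) (l : Fin L) (q : Fin K → Fin L → ℝ) : ℝ :=
  1 / (p k l * M *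
    ((fun j => β j k l) ⬝ᵥ (denomMat β p M k l q)⁻¹ *ᵥ (fun j => β j k l)))

section Aux

lemma my_sum_mulVec {ι : Type*} (s : Finset ι) (A : ι → Matrix (Fin L) (Fin L) ℝ)
    (x : Fin L → ℝ) : (∑ i ∈ s, A i) *ᵥ x = ∑ i ∈ s, A i *ᵥ x := by
  induction s using Finset.cons_induction with
  | empty => simp [Matrix.zero_mulVec]
  | cons a s ha ih => simp [Finset.sum_cons, Matrix.add_mulVec, ih]

lemma my_dotProduct_sum {ι : Type*} (s : Finset ι) (x : Fin L → ℝ)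
    (f : ι → Fin L → ℝ) : x ⬝ᵥ (∑ i ∈ s, f i) = ∑ i ∈ s, x ⬝ᵥ f i := by
  induction s using Finset.cons_induction with
  | empty => simp
  | cons a s ha ih => simp [Finset.sum_cons, dotProduct_add, ih]

lemma quad_denom (β : Fin L → Fin K → Fin L → ℝ) (p : Fin K → Fin L → ℝ)
    (M : ℝ) (k : Fin K) (l : Fin L) (q : Fin K → Fin L → ℝ) (x : Fin L → ℝ) :
    x ⬝ᵥ (denomMat β p M k l q) *ᵥ x
      = ∑ n ∈ univ.erase l, (p k n * q k n * M) * ((fun j => β j k n) ⬝ᵥ x) ^ 2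
        + ∑ j, lamDiag β p k q j * x j ^ 2 := by
  unfold denomMat
  rw [Matrix.add_mulVec, dotProduct_add, my_sum_mulVec, my_dotProduct_sum]
  congr 1
  · refine Finset.sum_congr rfl fun n _ => ?_
    rw [Matrix.smul_mulVec, dotProduct_smul]
    simp only [smul_eq_mul]
    congr 1
    simp only [dotProduct, mulVec, vecMulVec_apply, Finset.mul_sum, Finset.sum_mul, sq]
    rw [Finset.sum_comm]
    exact Finset.sum_congr rfl fun i _ => Finset.sum_congr rfl fun j _ => by
      ring
  · simp only [dotProduct, mulVec_diagonal]
    exact Finset.sum_congr rfl fun j _ => by ring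

lemma herm_denom (β : Fin L → Fin K → Fin L → ℝ) (p : Fin K → Fin L → ℝ)
    (M : ℝ) (k : Fin K) (l : Fin L) (q : Fin K → Fin L → ℝ) :
    (denomMat β p M k l q).IsHermitian := by
  unfold denomMat
  refine Matrix.IsHermitian.add ?_ (Matrix.isHermitian_diagonal _)
  unfold Matrix.IsHermitian
  rw [conjTranspose_sum]
  refine Finset.sum_congr rfl fun n _ => ?_
  ext i j
  simp [vecMulVec_apply, mul_comm]

lemma lam_pos (β : Fin L → Fin K → Fin L → ℝ) (hβ : ∀ j m n, 0 < β j m n)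
    (p : Fin K → Fin L → ℝ) (hp : ∀ m n, 0 < p m n)
    (k : Fin K) (q : Fin K → Fin L → ℝ) (hq : ∀ m n, 0 < q m n) (j : Fin L) :
    0 < lamDiag β p k q j := by
  unfold lamDiag
  have h1 : (0:ℝ) < 1 + ∑ i, β j k i * p k i :=
    add_pos_of_pos_of_nonneg one_pos
      (Finset.sum_nonneg fun i _ => le_of_lt (mul_pos (hβ _ _ _) (hp _ _)))
  have h2 : (0:ℝ) < 1 + ∑ n, ∑ m, β j m n * q m n :=
    add_pos_of_pos_of_nonneg one_pos
      (Finset.sum_nonneg fun n _ => Finset.sum_nonneg fun m _ =>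
        le_of_lt (mul_pos (hβ _ _ _) (hq _ _)))
  exact mul_pos h1 h2

lemma posdef_denom (β : Fin L → Fin K → Fin L → ℝ) (hβ : ∀ j m n, 0 < β j m n)
    (p : Fin K → Fin L → ℝ) (hp : ∀ m n, 0 < p m n) (M : ℝ) (hM : 0 < M)
    (k : Fin K) (l : Fin L) (q : Fin K → Fin L → ℝ) (hq : ∀ m n, 0 < q m n) :
    (denomMat β p M k l q).PosDef := by
  refine posDef_iff_dotProduct_mulVec.mpr ⟨herm_denom β p M k l q, fun x hx => ?_⟩
  rw [star_trivial, quad_denom]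
  refine add_pos_of_nonneg_of_pos ?_ ?_
  · refine Finset.sum_nonneg fun n _ => mul_nonneg ?_ (sq_nonneg _)
    exact le_of_lt (mul_pos (mul_pos (hp _ _) (hq _ _)) hM)
  · obtain ⟨j, hj⟩ := Function.ne_iff.mp hx
    refine Finset.sum_pos' (fun i _ => ?_) ⟨j, Finset.mem_univ j, ?_⟩
    · exact mul_nonneg (le_of_lt (lam_pos β hβ p hp k q hq i)) (sq_nonneg _)
    · exact mul_pos (lam_pos β hβ p hp k q hq j) (pow_two_pos_of_ne_zero hj)

/-- Key lemma: if the quadratic form of `A` is dominated by that of `B`, with both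
positive definite, then the quadratic form of `B⁻¹` is dominated by that of `A⁻¹`. -/
lemma inv_quad_antitone {A B : Matrix (Fin L) (Fin L) ℝ} (hA : A.PosDef) (hB : B.PosDef)
    (h : ∀ x : Fin L → ℝ, x ⬝ᵥ A *ᵥ x ≤ x ⬝ᵥ B *ᵥ x) (v : Fin L → ℝ) :
    v ⬝ᵥ B⁻¹ *ᵥ v ≤ v ⬝ᵥ A⁻¹ *ᵥ v := by
  set x := B⁻¹ *ᵥ v with hxdef
  set y := A⁻¹ *ᵥ v with hydef
  have hBx : B *ᵥ x = v := by
    rw [hxdef, Matrix.mulVec_mulVec, Matrix.mul_nonsing_inv _ hB.det_pos.ne'.isUnit,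
      Matrix.one_mulVec]
  have hAy : A *ᵥ y = v := by
    rw [hydef, Matrix.mulVec_mulVec, Matrix.mul_nonsing_inv _ hA.det_pos.ne'.isUnit,
      Matrix.one_mulVec]
  have hyAx : y ⬝ᵥ A *ᵥ x = v ⬝ᵥ x := by
    rw [Matrix.dotProduct_mulVec, ← Matrix.mulVec_transpose]
    have : Aᵀ = A := by
      have := hA.isHermitian; rwa [Matrix.IsHermitian, conjTranspose_eq_transpose_of_trivial] at this
    rw [this, hAy]
  have hxv : x ⬝ᵥ v = v ⬝ᵥ x := dotProduct_comm _ _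
  have hyv : y ⬝ᵥ v = v ⬝ᵥ y := dotProduct_comm _ _
  have hpsd : 0 ≤ (x - y) ⬝ᵥ A *ᵥ (x - y) := by
    have := hA.posSemidef.dotProduct_mulVec_nonneg (x - y)
    rwa [star_trivial] at this
  have hexp : (x - y) ⬝ᵥ A *ᵥ (x - y)
      = x ⬝ᵥ A *ᵥ x - x ⬝ᵥ v - v ⬝ᵥ x + v ⬝ᵥ y := by
    rw [Matrix.mulVec_sub, hAy, sub_dotProduct, dotProduct_sub, dotProduct_sub, hyAx, hyv]
    ring
  have hBxq : x ⬝ᵥ B *ᵥ x = x ⬝ᵥ v := by rw [hBx]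
  have hq := h x
  rw [hBxq] at hq
  -- goal : v ⬝ᵥ x ≤ v ⬝ᵥ y
  rw [hexp] at hpsd
  linarith

end Aux

/-- Monotonicity of `I_{kl}`: increasing the power vector componentwise does not decrease
`I_{kl}(q) = q_{kl}/SINR_{kl}(q)`. -/
theorem stmt_14 (β : Fin L → Fin K → Fin L → ℝ) (hβ : ∀ j m n, 0 < β j m n)
    (p : Fin K → Fin L → ℝ) (hp : ∀ m n, 0 < p m n) (M : ℝ) (hM : 0 < M)
    (k : Fin K) (l : Fin L) :
    ∀ q₁ q₂ : Fin K → Fin L → ℝ, (∀ m n, 0 < q₂ m n) → (∀ m n, q₂ m n ≤ q₁ m n) →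
      interfFun β p M k l q₂ ≤ interfFun β p M k l q₁ := by
  intro q₁ q₂ hq₂ hle
  have hq₁ : ∀ m n, 0 < q₁ m n := fun m n => lt_of_lt_of_le (hq₂ m n) (hle m n)
  have hA₁ := posdef_denom β hβ p hp M hM k l q₁ hq₁
  have hA₂ := posdef_denom β hβ p hp M hM k l q₂ hq₂
  set v : Fin L → ℝ := fun j => β j k l with hv
  have hquad : ∀ x : Fin L → ℝ,
      x ⬝ᵥ (denomMat β p M k l q₂) *ᵥ x ≤ x ⬝ᵥ (denomMat β p M k l q₁) *ᵥ x := by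
    intro x
    rw [quad_denom, quad_denom]
    gcongr
    · exact (hp _ _).le
    · exact hle _ _
    · unfold lamDiag
      refine mul_le_mul_of_nonneg_left ?_ (le_of_lt (add_pos_of_pos_of_nonneg one_pos
        (Finset.sum_nonneg fun i _ => le_of_lt (mul_pos (hβ _ _ _) (hp _ _)))))
      gcongr
      · exact (hβ _ _ _).le
      · exact hle _ _
  have hmono := inv_quad_antitone hA₂ hA₁ hquad v
  have hv0 : v ≠ 0 := fun h0 => (hβ l k l).ne' (congrFun h0 l)
  have hpos₁ : 0 < v ⬝ᵥ (denomMat β p M k l q₁)⁻¹ *ᵥ v := by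
    have := hA₁.inv.dotProduct_mulVec_pos hv0
    rwa [star_trivial] at this
  unfold interfFun
  apply one_div_le_one_div_of_le
  · exact mul_pos (mul_pos (hp k l) hM) hpos₁
  · exact mul_le_mul_of_nonneg_left hmono (le_of_lt (mul_pos (hp k l) hM))
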